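/- If dJ/dt = J·J₋ − J₋·J holds for a block tridiagonal matrix J with strictly lower part J₋ (block subdiagonal), then the (1,1) block satisfies d(Jⁿ)₁₁/dt = (Jⁿ⁺¹)₁₁ − (Jⁿ)₁₁·J₁₁ + (Jⁿ)₁₁·(J₋)₁₁ − (J₋)₁₁·(Jⁿ)₁₁ for all n ∈ ℕ. -/

import Mathlib

/-- Product of two infinite block matrices (entries are 2×2 complex blocks). -/
noncomputable def blockMul (X Y : ℕ → ℕ → Matrix (Fin 2) (Fin 2) ℂ) :
    ℕ → ℕ → Matrix (Fin 2) (Fin 2) ℂ :=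
  fun i j => ∑' k : ℕ, X i k * Y k j

/-- Powers of an infinite block matrix. -/
noncomputable def blockPow (J : ℕ → ℕ → Matrix (Fin 2) (Fin 2) ℂ) : ℕ → ℕ → ℕ → Matrix (Fin 2) (Fin 2) ℂ
  | 0 => fun i j => if i = j then 1 else 0
  | n + 1 => blockMul (blockPow J n) J

/-- Strictly lower triangular part of a 2×2 block. -/
def lowerPart (X : Matrix (Fin 2) (Fin 2) ℂ) : Matrix (Fin 2) (Fin 2) ℂ :=
  !![0, 0; X 1 0, 0]

/-- The strictly lower (scalar-)triangular part `J₋` of a block tridiagonal matrix. -/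
noncomputable def blockMinus (J : ℕ → ℕ → Matrix (Fin 2) (Fin 2) ℂ) :
    ℕ → ℕ → Matrix (Fin 2) (Fin 2) ℂ :=
  fun i j => if i = j then lowerPart (J i i) else if i = j + 1 then J i j else 0

/-- Row band condition: `X i k = 0` whenever `k > i + m`. -/
def RowBand (X : ℕ → ℕ → Matrix (Fin 2) (Fin 2) ℂ) (m : ℕ) : Prop :=
  ∀ i k, i + m < k → X i k = 0

lemma blockMul_eq_sum {X Y : ℕ → ℕ → Matrix (Fin 2) (Fin 2) ℂ} {m : ℕ}
    (hX : RowBand X m) (i j : ℕ) :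
    blockMul X Y i j = ∑ k ∈ Finset.range (i + m + 1), X i k * Y k j := by
  apply tsum_eq_sum
  intro k hk
  rw [hX i k (by simpa [Finset.mem_range, Nat.lt_succ_iff, not_le] using hk), zero_mul]

lemma rowBand_blockMul {X Y : ℕ → ℕ → Matrix (Fin 2) (Fin 2) ℂ} {m m' : ℕ}
    (hX : RowBand X m) (hY : RowBand Y m') : RowBand (blockMul X Y) (m + m') := by
  intro i k hik
  rw [blockMul_eq_sum hX]
  apply Finset.sum_eq_zero
  intro l hl
  rw [hY l k (by simp only [Finset.mem_range, Nat.lt_succ_iff] at hl; omega), mul_zero]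

lemma rowBand_of_eq {X Y : ℕ → ℕ → Matrix (Fin 2) (Fin 2) ℂ} {m m' : ℕ}
    (hX : RowBand X m) (h : ∀ i k, Y i k = X i k) (hm : m = m') : RowBand Y m' := by
  intro i k hik; rw [h]; exact hX i k (by omega)

lemma blockMul_assoc {X Y Z : ℕ → ℕ → Matrix (Fin 2) (Fin 2) ℂ} {m m' : ℕ}
    (hX : RowBand X m) (hY : RowBand Y m') (i j : ℕ) :
    blockMul (blockMul X Y) Z i j = blockMul X (blockMul Y Z) i j := by
  rw [blockMul_eq_sum (rowBand_blockMul hX hY), blockMul_eq_sum hX]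
  have h2 : ∀ l ∈ Finset.range (i + m + 1),
      X i l * blockMul Y Z l j
        = ∑ k ∈ Finset.range (i + (m + m') + 1), X i l * (Y l k * Z k j) := by
    intro l hl
    rw [blockMul_eq_sum hY, Finset.mul_sum]
    apply Finset.sum_subset
    · intro k hk
      simp only [Finset.mem_range, Nat.lt_succ_iff] at *
      omega
    · intro k _ hk
      rw [hY l k (by simp only [Finset.mem_range, Nat.lt_succ_iff, not_le] at *; omega),
        zero_mul, mul_zero]
  rw [Finset.sum_congr rfl h2, Finset.sum_comm]
  apply Finset.sum_congr rfl
  intro k _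
  rw [blockMul_eq_sum hX, Finset.sum_mul]
  apply Finset.sum_congr rfl
  intro l _
  rw [mul_assoc]

lemma rowBand_blockMinus (J : ℕ → ℕ → Matrix (Fin 2) (Fin 2) ℂ) :
    RowBand (blockMinus J) 0 := by
  intro i k hik
  simp only [blockMinus]
  rw [if_neg (by omega), if_neg (by omega)]

section Main

variable (J : ℝ → ℕ → ℕ → Matrix (Fin 2) (Fin 2) ℂ)

lemma rowBand_J (hband : ∀ (t : ℝ) (i j : ℕ), J t i j ≠ 0 → (i ≤ j + 1 ∧ j ≤ i + 1))
    (t : ℝ) : RowBand (J t) 1 := by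
  intro i k hik
  by_contra h
  have := (hband t i k h).2
  omega

lemma rowBand_blockPow (hband : ∀ (t : ℝ) (i j : ℕ), J t i j ≠ 0 → (i ≤ j + 1 ∧ j ≤ i + 1))
    (t : ℝ) (n : ℕ) : RowBand (blockPow (J t) n) n := by
  induction n with
  | zero =>
    intro i k hik
    simp only [blockPow]
    rw [if_neg (by omega)]
  | succ n ih =>
    exact rowBand_blockMul ih (rowBand_J J hband t)

lemma key (hband : ∀ (t : ℝ) (i j : ℕ), J t i j ≠ 0 → (i ≤ j + 1 ∧ j ≤ i + 1))
    (hlax : ∀ (t : ℝ) (i j : ℕ) (a b : Fin 2),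
      HasDerivAt (fun s => J s i j a b)
        ((blockMul (J t) (blockMinus (J t)) i j -
          blockMul (blockMinus (J t)) (J t) i j) a b) t) :
    ∀ (n : ℕ) (t : ℝ) (i j : ℕ) (a b : Fin 2),
      HasDerivAt (fun s => blockPow (J s) n i j a b)
        ((blockMul (blockPow (J t) n) (blockMinus (J t)) i j -
          blockMul (blockMinus (J t)) (blockPow (J t) n) i j) a b) t := by
  intro n
  induction n with
  | zero =>
    intro t i j a b
    have h1 : blockMul (blockPow (J t) 0) (blockMinus (J t)) i j = blockMinus (J t) i j := by
      unfold blockMul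
      rw [tsum_eq_single i (fun k hk => by
        simp only [blockPow]; rw [if_neg (fun h => hk h.symm), zero_mul])]
      simp [blockPow]
    have h2 : blockMul (blockMinus (J t)) (blockPow (J t) 0) i j = blockMinus (J t) i j := by
      unfold blockMul
      rw [tsum_eq_single j (fun k hk => by
        simp only [blockPow]; rw [if_neg hk, mul_zero])]
      simp [blockPow]
    rw [h1, h2, sub_self]
    show HasDerivAt (fun _ => blockPow (J t) 0 i j a b) _ t
    simpa using hasDerivAt_const t ((blockPow (J t) 0 i j) a b)
  | succ n ih =>
    intro t i j a b
    have hP : ∀ s, RowBand (blockPow (J s) n) n := fun s => rowBand_blockPow J hband s n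
    have hJm : RowBand (blockMinus (J t)) 0 := rowBand_blockMinus (J t)
    have hJ : RowBand (J t) 1 := rowBand_J J hband t
    -- rewrite the function as a finite sum
    have hfun : ∀ s, blockPow (J s) (n + 1) i j a b
        = ∑ k ∈ Finset.range (i + n + 1), ∑ c, blockPow (J s) n i k a c * J s k j c b := by
      intro s
      show blockMul (blockPow (J s) n) (J s) i j a b = _
      rw [blockMul_eq_sum (hP s)]
      rw [Matrix.sum_apply]
      exact Finset.sum_congr rfl fun k _ => Matrix.mul_apply
    have hd : HasDerivAt
        (fun s => ∑ k ∈ Finset.range (i + n + 1), ∑ c,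
          blockPow (J s) n i k a c * J s k j c b)
        (∑ k ∈ Finset.range (i + n + 1), ∑ c,
          ((blockMul (blockPow (J t) n) (blockMinus (J t)) i k -
            blockMul (blockMinus (J t)) (blockPow (J t) n) i k) a c * J t k j c b +
           blockPow (J t) n i k a c *
            (blockMul (J t) (blockMinus (J t)) k j -
             blockMul (blockMinus (J t)) (J t) k j) c b)) t := by
      apply HasDerivAt.fun_sum
      intro k _
      apply HasDerivAt.fun_sum
      intro c _
      exact (ih t i k a c).mul (hlax t k j c b)
    have hval :
        (∑ k ∈ Finset.range (i + n + 1), ∑ c,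
          ((blockMul (blockPow (J t) n) (blockMinus (J t)) i k -
            blockMul (blockMinus (J t)) (blockPow (J t) n) i k) a c * J t k j c b +
           blockPow (J t) n i k a c *
            (blockMul (J t) (blockMinus (J t)) k j -
             blockMul (blockMinus (J t)) (J t) k j) c b))
        = (blockMul (blockPow (J t) (n + 1)) (blockMinus (J t)) i j -
            blockMul (blockMinus (J t)) (blockPow (J t) (n + 1)) i j) a b := by
      have hstep : ∀ k, ∑ c,
          ((blockMul (blockPow (J t) n) (blockMinus (J t)) i k -
            blockMul (blockMinus (J t)) (blockPow (J t) n) i k) a c * J t k j c b +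
           blockPow (J t) n i k a c *
            (blockMul (J t) (blockMinus (J t)) k j -
             blockMul (blockMinus (J t)) (J t) k j) c b)
          = ((blockMul (blockPow (J t) n) (blockMinus (J t)) i k -
              blockMul (blockMinus (J t)) (blockPow (J t) n) i k) * J t k j +
             blockPow (J t) n i k *
              (blockMul (J t) (blockMinus (J t)) k j -
               blockMul (blockMinus (J t)) (J t) k j)) a b := by
        intro k
        rw [Matrix.add_apply, Matrix.mul_apply, Matrix.mul_apply, ← Finset.sum_add_distrib]
      simp only [hstep]
      -- matrix-level identity
      have hPmJ : RowBand (blockMul (blockPow (J t) n) (blockMinus (J t))) n :=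
        rowBand_of_eq (rowBand_blockMul (hP t) hJm) (fun _ _ => rfl) rfl
      have hJmP : RowBand (blockMul (blockMinus (J t)) (blockPow (J t) n)) n :=
        rowBand_of_eq (rowBand_blockMul hJm (hP t)) (fun _ _ => rfl) (by omega)
      have hmat :
        ∑ k ∈ Finset.range (i + n + 1),
            ((blockMul (blockPow (J t) n) (blockMinus (J t)) i k -
              blockMul (blockMinus (J t)) (blockPow (J t) n) i k) * J t k j +
             blockPow (J t) n i k *
              (blockMul (J t) (blockMinus (J t)) k j -
               blockMul (blockMinus (J t)) (J t) k j))
          = (blockMul (blockPow (J t) (n + 1)) (blockMinus (J t)) i j -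
             blockMul (blockMinus (J t)) (blockPow (J t) (n + 1)) i j) := calc
        _ = (blockMul (blockMul (blockPow (J t) n) (blockMinus (J t))) (J t) i j -
             blockMul (blockMul (blockMinus (J t)) (blockPow (J t) n)) (J t) i j) +
            (blockMul (blockPow (J t) n) (blockMul (J t) (blockMinus (J t))) i j -
             blockMul (blockPow (J t) n) (blockMul (blockMinus (J t)) (J t)) i j) := by
            rw [blockMul_eq_sum hPmJ, blockMul_eq_sum hJmP, blockMul_eq_sum (hP t),
              blockMul_eq_sum (hP t), ← Finset.sum_sub_distrib, ← Finset.sum_sub_distrib,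
              ← Finset.sum_add_distrib]
            apply Finset.sum_congr rfl
            intro k _
            rw [sub_mul, mul_sub]
        _ = (blockMul (blockPow (J t) (n + 1)) (blockMinus (J t)) i j -
             blockMul (blockMinus (J t)) (blockPow (J t) (n + 1)) i j) := by
            have e1 : blockMul (blockMul (blockPow (J t) n) (blockMinus (J t))) (J t) i j
                = blockMul (blockPow (J t) n) (blockMul (blockMinus (J t)) (J t)) i j :=
              blockMul_assoc (hP t) hJm i j
            have e2 : blockMul (blockMul (blockMinus (J t)) (blockPow (J t) n)) (J t) i j
                = blockMul (blockMinus (J t)) (blockMul (blockPow (J t) n) (J t)) i j :=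
              blockMul_assoc hJm (hP t) i j
            have e3 : blockMul (blockMul (blockPow (J t) n) (J t)) (blockMinus (J t)) i j
                = blockMul (blockPow (J t) n) (blockMul (J t) (blockMinus (J t))) i j :=
              blockMul_assoc (hP t) hJ i j
            show _ = blockMul (blockMul (blockPow (J t) n) (J t)) (blockMinus (J t)) i j -
              blockMul (blockMinus (J t)) (blockMul (blockPow (J t) n) (J t)) i j
            rw [e1, e2, e3]
            abel
      rw [← Matrix.sum_apply, hmat]
    rw [← hval]
    exact HasDerivAt.congr_of_eventuallyEq hd (Filter.Eventually.of_forall hfun)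

end Main

/-- If `J̇ = J·J₋ − J₋·J`, then
`d(Jⁿ)₁₁/dt = (Jⁿ⁺¹)₁₁ − (Jⁿ)₁₁J₁₁ + (Jⁿ)₁₁(J₋)₁₁ − (J₋)₁₁(Jⁿ)₁₁`. -/
theorem stmt_12 (J : ℝ → ℕ → ℕ → Matrix (Fin 2) (Fin 2) ℂ)
    (hband : ∀ (t : ℝ) (i j : ℕ), J t i j ≠ 0 → (i ≤ j + 1 ∧ j ≤ i + 1))
    (hlax : ∀ (t : ℝ) (i j : ℕ) (a b : Fin 2),
      HasDerivAt (fun s => J s i j a b)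
        ((blockMul (J t) (blockMinus (J t)) i j -
          blockMul (blockMinus (J t)) (J t) i j) a b) t) :
    ∀ (n : ℕ) (t : ℝ) (a b : Fin 2),
      HasDerivAt (fun s => blockPow (J s) n 0 0 a b)
        ((blockPow (J t) (n + 1) 0 0 - blockPow (J t) n 0 0 * J t 0 0 +
          (blockPow (J t) n 0 0 * blockMinus (J t) 0 0 -
            blockMinus (J t) 0 0 * blockPow (J t) n 0 0)) a b) t := by
  intro n t a b
  have h := key J hband hlax n t 0 0 a b
  have h1 : blockMul (blockPow (J t) n) (blockMinus (J t)) 0 0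
      = blockPow (J t) n 0 0 * blockMinus (J t) 0 0 + blockPow (J t) n 0 1 * J t 1 0 := by
    unfold blockMul
    rw [tsum_eq_sum (s := {0, 1}) (fun k hk => by
      simp only [Finset.mem_insert, Finset.mem_singleton, not_or] at hk
      have : blockMinus (J t) k 0 = 0 := by
        simp only [blockMinus]
        rw [if_neg hk.1, if_neg (by simpa using hk.2)]
      rw [this, mul_zero])]
    rw [Finset.sum_pair (by norm_num)]
    congr 1
  have h2 : blockPow (J t) (n + 1) 0 0
      = blockPow (J t) n 0 0 * J t 0 0 + blockPow (J t) n 0 1 * J t 1 0 := by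
    show blockMul (blockPow (J t) n) (J t) 0 0 = _
    unfold blockMul
    rw [tsum_eq_sum (s := {0, 1}) (fun k hk => by
      simp only [Finset.mem_insert, Finset.mem_singleton, not_or] at hk
      have : J t k 0 = 0 := by
        by_contra hne
        have := (hband t k 0 hne).1
        omega
      rw [this, mul_zero])]
    rw [Finset.sum_pair (by norm_num)]
  have h3 : blockMul (blockMinus (J t)) (blockPow (J t) n) 0 0
      = blockMinus (J t) 0 0 * blockPow (J t) n 0 0 := by
    unfold blockMul
    rw [tsum_eq_single 0 (fun k hk => by
      have : blockMinus (J t) 0 k = 0 := by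
        simp only [blockMinus]
        rw [if_neg (fun h => hk h.symm), if_neg (by omega)]
      rw [this, zero_mul])]
  rw [h1, h3] at h
  have : blockPow (J t) n 0 0 * blockMinus (J t) 0 0 + blockPow (J t) n 0 1 * J t 1 0 -
      blockMinus (J t) 0 0 * blockPow (J t) n 0 0
      = blockPow (J t) (n + 1) 0 0 - blockPow (J t) n 0 0 * J t 0 0 +
        (blockPow (J t) n 0 0 * blockMinus (J t) 0 0 -
          blockMinus (J t) 0 0 * blockPow (J t) n 0 0) := by
    rw [h2]; abel
  rw [this] at h
  exact h
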